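/- Let λ be a probability measure on ℝ (with the Borel σ-algebra) with ∫ |x| dλ(x) < ∞, let f : ℝ → ℝ be a bounded, measurable, non-negative, monotone non-decreasing function, and let 0 ≤ w₁ ≤ w₂ be real numbers (real powers taken with the convention 0⁰ = 1). Then (∫ x·f(x)^{w₂} dλ(x)) · (∫ f(x)^{w₁} dλ(x)) ≥ (∫ x·f(x)^{w₁} dλ(x)) · (∫ f(x)^{w₂} dλ(x)). -/

import Mathlib

open MeasureTheory

/-- Pointwise rearrangement inequality for rpow. -/
lemma key_pt {a b w₁ w₂ : ℝ} (hb : 0 ≤ b) (hab : b ≤ a) (hw₁ : 0 ≤ w₁) (hw : w₁ ≤ w₂) :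
    b ^ w₂ * a ^ w₁ ≤ a ^ w₂ * b ^ w₁ := by
  have ha : 0 ≤ a := hb.trans hab
  rcases hb.eq_or_lt with rfl | hb'
  · rcases (hw₁.trans hw).eq_or_lt with rfl | hw₂
    · have : w₁ = 0 := le_antisymm hw hw₁
      subst this; simp
    · rw [Real.zero_rpow hw₂.ne']
      have h1 : 0 ≤ a ^ w₂ := Real.rpow_nonneg ha _
      have h2 : 0 ≤ (0:ℝ) ^ w₁ := Real.rpow_nonneg le_rfl _
      nlinarith
  · have ha' : 0 < a := hb'.trans_le hab
    rw [show w₂ = w₁ + (w₂ - w₁) by ring, Real.rpow_add hb', Real.rpow_add ha']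
    have h1 : b ^ (w₂ - w₁) ≤ a ^ (w₂ - w₁) :=
      Real.rpow_le_rpow hb hab (by linarith)
    have h2 : 0 ≤ b ^ w₁ := Real.rpow_nonneg hb _
    have h3 : 0 ≤ a ^ w₁ := Real.rpow_nonneg ha _
    have h4 : 0 ≤ b ^ (w₂ - w₁) := Real.rpow_nonneg hb _
    nlinarith [mul_le_mul_of_nonneg_left h1 (mul_nonneg h3 h2)]

/-- Real-line cross-product inequality underlying Theorem A.5. Real powers
are `Real.rpow`, with `0 ^ 0 = 1`. -/
theorem cross_product_inequality
    (μ : Measure ℝ) [IsProbabilityMeasure μ]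
    (hint : Integrable (fun x : ℝ => x) μ)
    (f : ℝ → ℝ)
    (hf_meas : Measurable f) (hf_bdd : ∃ C : ℝ, ∀ x, |f x| ≤ C)
    (hf_nonneg : ∀ x, 0 ≤ f x) (hf_mono : Monotone f)
    (w₁ w₂ : ℝ) (hw₁ : 0 ≤ w₁) (hw : w₁ ≤ w₂) :
    (∫ x, x * f x ^ w₂ ∂μ) * (∫ x, f x ^ w₁ ∂μ)
      ≥ (∫ x, x * f x ^ w₁ ∂μ) * (∫ x, f x ^ w₂ ∂μ) := by
  obtain ⟨C, hC⟩ := hf_bdd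
  set g : ℝ → ℝ := fun x => f x ^ w₁ with hg
  set h : ℝ → ℝ := fun x => f x ^ w₂ with hh
  have hw₂ : 0 ≤ w₂ := hw₁.trans hw
  have hfle : ∀ x, f x ≤ max 1 C := fun x =>
    ((le_abs_self _).trans (hC x)).trans (le_max_right _ _)
  have hgb : ∀ x, ‖g x‖ ≤ max 1 C ^ w₁ := by
    intro x
    rw [Real.norm_eq_abs, abs_of_nonneg (Real.rpow_nonneg (hf_nonneg x) _)]
    exact Real.rpow_le_rpow (hf_nonneg x) (hfle x) hw₁
  have hhb : ∀ x, ‖h x‖ ≤ max 1 C ^ w₂ := by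
    intro x
    rw [Real.norm_eq_abs, abs_of_nonneg (Real.rpow_nonneg (hf_nonneg x) _)]
    exact Real.rpow_le_rpow (hf_nonneg x) (hfle x) hw₂
  have hgm : Measurable g := (Real.continuous_rpow_const hw₁).measurable.comp hf_meas
  have hhm : Measurable h := (Real.continuous_rpow_const hw₂).measurable.comp hf_meas
  -- integrability
  have hgint : Integrable g μ := by
    simpa using (integrable_const (1 : ℝ)).bdd_mul hgm.aestronglyMeasurable (Filter.Eventually.of_forall hgb)
  have hhint : Integrable h μ := by
    simpa using (integrable_const (1 : ℝ)).bdd_mul hhm.aestronglyMeasurable (Filter.Eventually.of_forall hhb)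
  have hxg : Integrable (fun x => x * g x) μ := by
    simpa [mul_comm] using hint.bdd_mul hgm.aestronglyMeasurable (Filter.Eventually.of_forall hgb)
  have hxh : Integrable (fun x => x * h x) μ := by
    simpa [mul_comm] using hint.bdd_mul hhm.aestronglyMeasurable (Filter.Eventually.of_forall hhb)
  -- pointwise nonnegativity on the product
  have key : ∀ p : ℝ × ℝ,
      0 ≤ (p.1 - p.2) * (h p.1 * g p.2 - h p.2 * g p.1) := by
    rintro ⟨x, y⟩
    rcases le_total y x with hxy | hxy
    · have hk := key_pt (hf_nonneg y) (hf_mono hxy) hw₁ hw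
      have : h y * g x ≤ h x * g y := hk
      nlinarith
    · have hk := key_pt (hf_nonneg x) (hf_mono hxy) hw₁ hw
      have : h x * g y ≤ h y * g x := hk
      nlinarith
  have hpos : 0 ≤ ∫ p : ℝ × ℝ,
      (p.1 - p.2) * (h p.1 * g p.2 - h p.2 * g p.1) ∂(μ.prod μ) :=
    integral_nonneg key
  -- expand the double integral
  have i1 : Integrable (fun p : ℝ × ℝ => (fun x => x * h x) p.1 * g p.2) (μ.prod μ) :=
    hxh.mul_prod hgint
  have i2 : Integrable (fun p : ℝ × ℝ => (fun x => x * g x) p.1 * h p.2) (μ.prod μ) :=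
    hxg.mul_prod hhint
  have i3 : Integrable (fun p : ℝ × ℝ => h p.1 * (fun x => x * g x) p.2) (μ.prod μ) :=
    hhint.mul_prod hxg
  have i4 : Integrable (fun p : ℝ × ℝ => g p.1 * (fun x => x * h x) p.2) (μ.prod μ) :=
    hgint.mul_prod hxh
  have e : (fun p : ℝ × ℝ => (p.1 - p.2) * (h p.1 * g p.2 - h p.2 * g p.1))
      = fun p : ℝ × ℝ =>
        ((fun x => x * h x) p.1 * g p.2 - (fun x => x * g x) p.1 * h p.2
          - h p.1 * ((fun x => x * g x) p.2)) + g p.1 * ((fun x => x * h x) p.2) := by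
    funext p; ring
  have i12 : Integrable (fun p : ℝ × ℝ =>
      (fun x => x * h x) p.1 * g p.2 - (fun x => x * g x) p.1 * h p.2) (μ.prod μ) := i1.sub i2
  have i123 : Integrable (fun p : ℝ × ℝ =>
      ((fun x => x * h x) p.1 * g p.2 - (fun x => x * g x) p.1 * h p.2)
        - h p.1 * ((fun x => x * g x) p.2)) (μ.prod μ) := i12.sub i3
  rw [e, integral_add i123 i4, integral_sub i12 i3,
    integral_sub i1 i2, integral_prod_mul (fun x => x * h x) g,
    integral_prod_mul (fun x => x * g x) h, integral_prod_mul h (fun x => x * g x),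
    integral_prod_mul g (fun x => x * h x)] at hpos
  simp only [hg, hh] at hpos ⊢
  linarith
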